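/- Let P(z) be a nonzero polynomial over a field K of characteristic p > 0, and let L be an algebraic closure of K. Then the following are equivalent: (a) P(z) is additive, i.e., P(z) = c_0 z + c_1 z^p + ⋯ + c_n z^{p^n} for some c_0, ..., c_n ∈ K; (b) P(y+z) = P(y) + P(z) holds for all y, z ∈ L; (c) the set of roots of P in L forms an F_p-vector space under addition, all roots occur with the same multiplicity, and that common multiplicity is a power of p. -/

import Mathlib

open Polynomial

theorem addpoly_core {p : ℕ} {F : Type*} [Field F] [IsAlgClosed F] [CharP F p]
    (hp : p.Prime) :
    ∀ (N : ℕ) (f : F[X]), f.natDegree ≤ N →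
      (∀ y z : F, eval (y + z) f = eval y f + eval z f) →
      ∀ n : ℕ, (∀ i : ℕ, n ≠ p ^ i) → f.coeff n = 0 := by
  haveI := Fact.mk hp
  intro N
  induction N using Nat.strong_induction_on with
  | _ N IH =>
    intro f hdeg hf n hn
    have h0 : eval 0 f = 0 := by have := hf 0 0; simpa using this
    rcases Nat.lt_or_ge f.natDegree n with hlt | hge
    · exact coeff_eq_zero_of_natDegree_lt hlt
    rcases Nat.eq_zero_or_pos n with rfl | hn0
    · rw [coeff_zero_eq_eval_zero]; exact h0
    have hn1 : n ≠ 1 := by simpa using hn 0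
    have hn2 : 2 ≤ n := by omega
    have hdf2 : 2 ≤ f.natDegree := le_trans hn2 hge
    -- taylor identity
    have htay : ∀ z : F, f.comp (X + C z) = f + C (eval z f) := by
      intro z
      apply Polynomial.funext
      intro y
      rw [eval_comp]
      simp [hf y z]
    -- derivative is constant
    set c₀ : F := eval 0 (derivative f) with hc₀
    have hder : derivative f = C c₀ := by
      apply Polynomial.funext
      intro z
      have := congrArg derivative (htay z)
      rw [derivative_comp, derivative_add, derivative_C, add_zero] at this
      have h2 := congrArg (eval 0) this
      rw [eval_mul, eval_comp] at h2
      simp at h2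
      simp [h2, hc₀]
    -- f - c₀ X has zero derivative
    have hd0 : derivative (f - C c₀ * X) = 0 := by
      rw [derivative_sub, hder]; simp
    set g : F[X] := contract p (f - C c₀ * X) with hg
    have hexp : expand F p g = f - C c₀ * X := expand_contract p hd0 hp.ne_zero
    -- g is additive
    have hgadd : ∀ y z : F, eval (y + z) g = eval y g + eval z g := by
      have key : ∀ u : F, eval (u ^ p) g = eval u f - c₀ * u := by
        intro u
        have := expand_eval p g u
        rw [hexp] at this
        rw [← this]; simp
      intro y z
      obtain ⟨u, hu⟩ := surjective_frobenius F p y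
      obtain ⟨w, hw⟩ := surjective_frobenius F p z
      have hu' : u ^ p = y := hu
      have hw' : w ^ p = z := hw
      have hsum : (u + w) ^ p = y + z := by rw [add_pow_char, hu', hw']
      rw [← hu', ← hw', ← add_pow_char, key, key, key, hf]
      ring
    -- degree comparison
    have hdeg1 : (f - C c₀ * X).natDegree = f.natDegree := by
      apply natDegree_sub_eq_left_of_natDegree_lt
      calc (C c₀ * X).natDegree ≤ X.natDegree := natDegree_C_mul_le c₀ X
      _ < f.natDegree := by rw [natDegree_X]; omega
    have hdegexp : g.natDegree * p = f.natDegree := by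
      have := natDegree_expand p g
      rw [hexp, hdeg1] at this
      exact this.symm
    have hglt : g.natDegree < f.natDegree := by
      have hp2 : 2 ≤ p := hp.two_le
      nlinarith [hdegexp]
    -- use IH
    have hcoeff : f.coeff n = (expand F p g).coeff n := by
      rw [hexp, coeff_sub]
      have : (C c₀ * X).coeff n = 0 := by
        rw [coeff_C_mul, coeff_X]
        simp
        omega
      rw [this, sub_zero]
    rw [hcoeff, coeff_expand hp.pos]
    split_ifs with hdvd
    · apply IH g.natDegree (lt_of_lt_of_le hglt hdeg) g le_rfl hgadd
      intro i hi
      apply hn (i + 1)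
      rw [pow_succ]
      rw [← hi]
      exact (Nat.div_mul_cancel hdvd).symm
    · rfl

theorem addpoly_repr {p : ℕ} {K : Type*} [Field K] (hp : p.Prime) (f : K[X])
    (h : ∀ n : ℕ, (∀ i : ℕ, n ≠ p ^ i) → f.coeff n = 0) :
    ∃ (m : ℕ) (c : ℕ → K), f = ∑ i ∈ Finset.range (m + 1), C (c i) * X ^ p ^ i := by
  refine ⟨f.natDegree, fun i => f.coeff (p ^ i), ?_⟩
  ext n
  rw [finset_sum_coeff]
  simp only [coeff_C_mul, coeff_X_pow, mul_ite, mul_one, mul_zero]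
  by_cases hex : ∃ i : ℕ, n = p ^ i
  · obtain ⟨i, rfl⟩ := hex
    by_cases him : i ≤ f.natDegree
    · rw [Finset.sum_eq_single_of_mem i (Finset.mem_range.mpr (by omega))]
      · simp
      · intro j _ hji
        rw [if_neg]
        intro e
        exact hji (Nat.pow_right_injective hp.two_le e.symm)
    · have hbig : f.natDegree < p ^ i := by
        calc f.natDegree < i := by omega
        _ < 2 ^ i := Nat.lt_two_pow_self
        _ ≤ p ^ i := Nat.pow_le_pow_left hp.two_le i
      rw [coeff_eq_zero_of_natDegree_lt hbig, Finset.sum_eq_zero]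
      intro j hj
      rw [if_neg]
      intro e
      have := Nat.pow_right_injective hp.two_le e
      simp only [Finset.mem_range] at hj
      omega
  · push_neg at hex
    rw [h _ hex, Finset.sum_eq_zero]
    intro j _
    rw [if_neg (hex j)]

theorem addpoly_aeval_add {p : ℕ} (hp : p.Prime) {K L : Type*} [Field K] [Field L]
    [Algebra K L] [CharP L p] (m : ℕ) (c : ℕ → K) (y z : L) :
    aeval (y + z) (∑ i ∈ Finset.range (m + 1), C (c i) * X ^ p ^ i) =
      aeval y (∑ i ∈ Finset.range (m + 1), C (c i) * X ^ p ^ i) +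
        aeval z (∑ i ∈ Finset.range (m + 1), C (c i) * X ^ p ^ i) := by
  haveI := Fact.mk hp
  simp only [map_sum, map_mul, map_pow, aeval_C, aeval_X]
  rw [← Finset.sum_add_distrib]
  refine Finset.sum_congr rfl fun i _ => ?_
  rw [add_pow_char_pow, mul_add]

theorem rootMult_pow {R : Type*} [CommRing R] [IsDomain R] {f : R[X]} (hf : f ≠ 0)
    (x : R) (n : ℕ) : rootMultiplicity x (f ^ n) = n * rootMultiplicity x f := by
  induction n with
  | zero => simp [rootMultiplicity_C]
  | succ n ih =>
    rw [pow_succ, rootMultiplicity_mul (mul_ne_zero (pow_ne_zero _ hf) hf), ih]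
    ring

theorem pow_surj_of_alg_closed {p : ℕ} (hp : p.Prime) {L : Type*} [Field L] [IsAlgClosed L]
    [CharP L p] (e : ℕ) (a : L) : ∃ b : L, b ^ p ^ e = a := by
  haveI := Fact.mk hp
  induction e generalizing a with
  | zero => exact ⟨a, by simp⟩
  | succ e ih =>
    obtain ⟨b', hb'⟩ := surjective_frobenius L p a
    obtain ⟨b, hb⟩ := ih b'
    exact ⟨b, by rw [pow_succ, pow_mul, hb, ← frobenius_def, hb']⟩

theorem addpoly_mult {p : ℕ} (hp : p.Prime) {K : Type*} [Field K] [CharP K p]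
    (P : K[X]) (hP : P ≠ 0) (m : ℕ) (c : ℕ → K)
    (hrep : P = ∑ i ∈ Finset.range (m + 1), C (c i) * X ^ p ^ i) :
    ∃ e : ℕ, ∀ y : AlgebraicClosure K, aeval y P = 0 →
      rootMultiplicity y (P.map (algebraMap K (AlgebraicClosure K))) = p ^ e := by
  classical
  haveI := Fact.mk hp
  set L := AlgebraicClosure K
  set A := algebraMap K L with hA
  -- normalize c to vanish above m
  set c' : ℕ → K := fun i => if i ≤ m then c i else 0 with hc'
  have hc'le : ∀ i, i ≤ m → c' i = c i := fun i hi => by simp [hc', hi]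
  have hc'gt : ∀ i, m < i → c' i = 0 := fun i hi => by simp [hc', Nat.not_le.mpr hi]
  have hrep' : P = ∑ i ∈ Finset.range (m + 1), C (c' i) * X ^ p ^ i := by
    rw [hrep]
    refine Finset.sum_congr rfl fun i hi => ?_
    simp only [Finset.mem_range] at hi
    rw [hc'le i (by omega)]
  have hcne : ∃ i, c' i ≠ 0 := by
    by_contra h
    push_neg at h
    apply hP
    rw [hrep']
    exact Finset.sum_eq_zero fun i _ => by rw [h i, map_zero, zero_mul]
  set e := Nat.find hcne with he
  have hce : c' e ≠ 0 := Nat.find_spec hcne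
  have hclt : ∀ j < e, c' j = 0 := fun j hj => by
    have := Nat.find_min hcne (he ▸ hj)
    exact not_not.mp this
  have hem : e ≤ m := by
    by_contra h
    exact hce (hc'gt e (by omega))
  refine ⟨e, ?_⟩
  -- choose p^e-th roots of coefficients
  have hd : ∀ i : ℕ, ∃ b : L, b ^ p ^ e = A (c' (e + i)) := fun i =>
    pow_surj_of_alg_closed hp e _
  choose d hdspec using hd
  set Q : L[X] := ∑ i ∈ Finset.range (m + 1), C (d i) * X ^ p ^ i with hQ
  -- Q ^ p ^ e = P.map A
  have hPmap : P.map A = ∑ i ∈ Finset.range (m + 1), C (A (c' i)) * X ^ p ^ i := by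
    rw [hrep', Polynomial.map_sum]
    refine Finset.sum_congr rfl fun i _ => by rw [Polynomial.map_mul, map_C, Polynomial.map_pow, map_X]
  have hQP : Q ^ p ^ e = P.map A := by
    rw [hQ, sum_pow_char_pow]
    have hterm : ∀ i ∈ Finset.range (m + 1),
        (C (d i) * X ^ p ^ i) ^ p ^ e = C (A (c' (e + i))) * X ^ p ^ (e + i) := by
      intro i _
      rw [mul_pow, ← C_pow, hdspec, ← pow_mul, ← pow_add]
      ring_nf
    rw [Finset.sum_congr rfl hterm, hPmap]
    -- reindex
    have hL : ∑ i ∈ Finset.range (m + 1), C (A (c' (e + i))) * X ^ p ^ (e + i)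
        = ∑ j ∈ Finset.Ico e (m + 1 + e), C (A (c' j)) * X ^ p ^ j := by
      rw [Finset.sum_Ico_eq_sum_range]
      rw [show m + 1 + e - e = m + 1 by omega]
    rw [hL]
    have h1 : ∑ j ∈ Finset.Ico e (m + 1 + e), C (A (c' j)) * X ^ p ^ j
        = ∑ j ∈ Finset.range (m + 1 + e), C (A (c' j)) * X ^ p ^ j := by
      apply Finset.sum_subset
      · intro j hj
        simp only [Finset.mem_Ico, Finset.mem_range] at *
        omega
      · intro j hj hj2
        simp only [Finset.mem_Ico, Finset.mem_range, not_and, not_le] at hj hj2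
        rw [hclt j (by omega), map_zero, map_zero, zero_mul]
    have h2 : ∑ j ∈ Finset.range (m + 1), C (A (c' j)) * X ^ p ^ j
        = ∑ j ∈ Finset.range (m + 1 + e), C (A (c' j)) * X ^ p ^ j := by
      apply Finset.sum_subset
      · intro j hj
        simp only [Finset.mem_range] at *
        omega
      · intro j hj hj2
        simp only [Finset.mem_range, not_lt] at hj2
        rw [hc'gt j (by omega), map_zero, map_zero, zero_mul]
    rw [h1, h2]
  -- derivative of Q
  have hd0 : d 0 ≠ 0 := by
    intro h
    apply hce
    have := hdspec 0
    rw [h, zero_pow (pow_ne_zero e hp.ne_zero), add_zero] at this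
    exact (_root_.map_eq_zero A).mp this.symm
  have hQder : derivative Q = C (d 0) := by
    rw [hQ, derivative_sum]
    rw [Finset.sum_eq_single_of_mem 0 (Finset.mem_range.mpr (by omega))]
    · simp
    · intro i _ hi
      rw [derivative_C_mul, derivative_X_pow]
      have : ((p ^ i : ℕ) : L) = 0 := by
        rw [Nat.cast_pow, CharP.cast_eq_zero, zero_pow (by omega)]
      rw [this, map_zero, zero_mul, mul_zero]
  have hQne : Q ≠ 0 := by
    intro h
    rw [h, derivative_zero] at hQder
    exact hd0 (by simpa using hQder.symm)
  have hQsep : Q.Separable := by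
    rw [Polynomial.Separable, hQder]
    exact ⟨0, C (d 0)⁻¹, by rw [← C_mul, inv_mul_cancel₀ hd0]; simp⟩
  intro y hy
  have heval : eval y (P.map A) = 0 := by
    rw [eval_map, ← aeval_def, hy]
  have hyQ : eval y Q = 0 := by
    have : eval y (Q ^ p ^ e) = 0 := by rw [hQP]; exact heval
    rw [eval_pow] at this
    exact pow_eq_zero_iff (pow_ne_zero e hp.ne_zero) |>.mp this
  have hone : rootMultiplicity y Q = 1 := by
    have hle := rootMultiplicity_le_one_of_separable hQsep y
    have hpos : 0 < rootMultiplicity y Q := (rootMultiplicity_pos hQne).mpr hyQ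
    omega
  rw [← hQP, rootMult_pow hQne, hone, mul_one]
theorem addpoly_of_roots {p : ℕ} (hp : p.Prime) {K : Type*} [Field K] [CharP K p]
    (P : K[X]) (hP : P ≠ 0)
    (h0 : aeval (0 : AlgebraicClosure K) P = 0)
    (hadd : ∀ y z : AlgebraicClosure K, aeval y P = 0 → aeval z P = 0 →
      aeval (y + z) P = 0)
    (e : ℕ)
    (hmult : ∀ y : AlgebraicClosure K, aeval y P = 0 →
      rootMultiplicity y (P.map (algebraMap K (AlgebraicClosure K))) = p ^ e) :
    ∃ (m : ℕ) (c : ℕ → K), P = ∑ i ∈ Finset.range (m + 1), C (c i) * X ^ p ^ i := by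
  classical
  haveI := Fact.mk hp
  set L := AlgebraicClosure K with hL
  set A := algebraMap K L with hA
  set Pm := P.map A with hPmdef
  have hPmne : Pm ≠ 0 := by
    rw [hPmdef, Ne, Polynomial.map_eq_zero]
    exact hP
  have haeval : ∀ y : L, aeval y P = eval y Pm := fun y => by
    rw [hPmdef, eval_map, aeval_def]
  set V : Finset L := Pm.roots.toFinset with hV
  have hmemV : ∀ y : L, y ∈ V ↔ aeval y P = 0 := by
    intro y
    rw [hV, Multiset.mem_toFinset, mem_roots hPmne, IsRoot, ← haeval]
  have h0V : (0 : L) ∈ V := (hmemV 0).mpr h0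
  have haddV : ∀ y ∈ V, ∀ v ∈ V, y + v ∈ V := fun y hy v hv =>
    (hmemV _).mpr (hadd y v ((hmemV y).mp hy) ((hmemV v).mp hv))
  have hnsmul : ∀ (n : ℕ) (v : L), v ∈ V → ∀ y ∈ V, y + n • v ∈ V := by
    intro n
    induction n with
    | zero => intro v _ y hy; simpa using hy
    | succ n ih =>
      intro v hv y hy
      rw [succ_nsmul, ← add_assoc]
      exact haddV _ (ih v hv y hy) v hv
  have hsubV : ∀ y ∈ V, ∀ v ∈ V, y - v ∈ V := by
    intro y hy v hv
    have hcast : ((p - 1 : ℕ) : L) = -1 := by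
      rw [Nat.cast_sub hp.one_lt.le, CharP.cast_eq_zero]
      simp
    have h1 : y + (p - 1) • v = y - v := by
      rw [nsmul_eq_mul, hcast]
      ring
    rw [← h1]
    exact hnsmul (p - 1) v hv y hy
  have hVcard : 0 < V.card := Finset.card_pos.mpr ⟨0, h0V⟩
  -- Q₀ : product of (X - C y) over V
  set Q₀ : L[X] := ∏ y ∈ V, (X - C y) with hQ₀def
  have hQ₀monic : Q₀.Monic := monic_prod_of_monic _ _ fun y _ => monic_X_sub_C y
  have hQ₀ne : Q₀ ≠ 0 := hQ₀monic.ne_zero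
  have hQ₀deg : Q₀.natDegree = V.card := by
    rw [hQ₀def, natDegree_prod_of_monic _ _ fun y _ => monic_X_sub_C y]
    simp
  have hQ₀root : ∀ v ∈ V, eval v Q₀ = 0 := by
    intro v hv
    rw [hQ₀def, eval_prod]
    exact Finset.prod_eq_zero hv (by simp)
  have hcompV : ∀ v ∈ V, Q₀.comp (X + C v) = Q₀ := by
    intro v hv
    have hterm : ∀ y : L, (X - C y).comp (X + C v) = X - C (y - v) := by
      intro y
      rw [sub_comp, X_comp, C_comp, C_sub]
      ring
    rw [hQ₀def, prod_comp, Finset.prod_congr rfl fun y _ => hterm y]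
    refine Finset.prod_nbij' (fun y => y - v) (fun y => y + v) ?_ ?_ ?_ ?_ ?_
    · intro a ha; exact hsubV a ha v hv
    · intro a ha; exact haddV a ha v hv
    · intro a _; simp
    · intro a _; simp
    · intro a _; rfl
  -- additivity of Q₀
  have hQ₀add : ∀ y z : L, eval (y + z) Q₀ = eval y Q₀ + eval z Q₀ := by
    intro y z
    set R : L[X] := Q₀.comp (C y + X) - C (eval y Q₀) - Q₀ with hRdef
    have hevalR : ∀ w : L, eval w R = eval (y + w) Q₀ - eval y Q₀ - eval w Q₀ := by
      intro w
      rw [hRdef]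
      simp [eval_comp]
    have hR0 : R = 0 := by
      by_contra hR0
      have hcompmonic : (Q₀.comp (C y + X)).Monic := by
        rw [add_comm]
        exact hQ₀monic.comp (monic_X_add_C y) (by rw [natDegree_X_add_C]; omega)
      have hcompdeg : (Q₀.comp (C y + X)).natDegree = Q₀.natDegree := by
        rw [natDegree_comp, add_comm, natDegree_X_add_C, mul_one]
      have hsublt : degree (Q₀.comp (C y + X) - Q₀) < degree Q₀ := by
        have hdeq : degree (Q₀.comp (C y + X)) = degree Q₀ := by
          rw [degree_eq_natDegree hcompmonic.ne_zero, degree_eq_natDegree hQ₀ne, hcompdeg]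
        rw [← hdeq]
        exact degree_sub_lt hdeq hcompmonic.ne_zero
          (by rw [hcompmonic.leadingCoeff, hQ₀monic.leadingCoeff])
      have hdegR : degree R < degree Q₀ := by
        have : R = (Q₀.comp (C y + X) - Q₀) - C (eval y Q₀) := by rw [hRdef]; ring
        rw [this]
        refine lt_of_le_of_lt (degree_sub_le _ _) (max_lt hsublt ?_)
        refine lt_of_le_of_lt (degree_C_le) ?_
        rw [degree_eq_natDegree hQ₀ne]
        exact_mod_cast Nat.cast_pos.mpr (by omega : 0 < Q₀.natDegree)
      have hndR : R.natDegree < V.card := by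
        rw [← hQ₀deg]
        exact natDegree_lt_natDegree hR0 hdegR
      have hsubroots : V.val ≤ R.roots := by
        rw [Multiset.le_iff_subset V.nodup]
        intro a ha
        rw [mem_roots hR0, IsRoot, hevalR]
        have haV : a ∈ V := ha
        have h1 : eval (y + a) Q₀ = eval y Q₀ := by
          have := congrArg (eval y) (hcompV a haV)
          rwa [eval_comp, eval_add, eval_X, eval_C] at this
        rw [h1, hQ₀root a haV]
        ring
      have := (Multiset.card_le_card hsubroots).trans (card_roots' R)
      simp only [Finset.card_def] at hndR
      omega
    have := hevalR z
    rw [hR0, eval_zero] at this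
    linear_combination -this
  -- coefficients of Q₀ vanish off p-powers
  have hQ₀coeff := addpoly_core hp Q₀.natDegree Q₀ le_rfl hQ₀add
  obtain ⟨mq, cq, hQ₀rep⟩ := addpoly_repr hp Q₀ hQ₀coeff
  -- factorization of Pm
  have hrootsPm : Pm.roots = p ^ e • V.val := by
    ext a
    rw [count_roots, Multiset.count_nsmul]
    by_cases haV : a ∈ V
    · have h1 : rootMultiplicity a Pm = p ^ e := hmult a ((hmemV a).mp haV)
      have h2 : V.val.count a = 1 := by
        rw [Multiset.count_eq_one_of_mem V.nodup haV]
      rw [h1, h2, mul_one]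
    · have h1 : rootMultiplicity a Pm = 0 := by
        apply rootMultiplicity_eq_zero
        rw [IsRoot, ← haeval]
        exact fun h => haV ((hmemV a).mpr h)
      have h2 : V.val.count a = 0 := by
        rw [Multiset.count_eq_zero]
        exact haV
      rw [h1, h2, mul_zero]
  obtain ⟨lc, hfactor⟩ : ∃ lc : L, Pm = C lc * Q₀ ^ p ^ e := by
    refine ⟨Pm.leadingCoeff, ?_⟩
    have hsplit := Splits.eq_prod_roots (IsAlgClosed.splits Pm)
    rw [hrootsPm, Multiset.map_nsmul, Multiset.prod_nsmul] at hsplit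
    rw [hQ₀def, Finset.prod_eq_multiset_prod]
    exact hsplit
  -- coefficients of P vanish off p-powers
  apply addpoly_repr hp
  intro n hn
  have hPmcoeff : Pm.coeff n = 0 := by
    rw [hfactor, hQ₀rep, sum_pow_char_pow, Finset.mul_sum, finset_sum_coeff]
    apply Finset.sum_eq_zero
    intro i _
    rw [mul_pow, ← C_pow, ← pow_mul, ← pow_add, ← mul_assoc, ← C_mul, coeff_C_mul,
      coeff_X_pow, if_neg (hn (i + e)), mul_zero]
  have : A (P.coeff n) = 0 := by
    rw [← coeff_map, ← hPmdef, hPmcoeff]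
  exact (_root_.map_eq_zero A).mp this

/-- Characterization of additive polynomials over a field `K` of characteristic `p`,
with `L` an algebraic closure of `K`. The following are equivalent for a nonzero
polynomial `P` over `K`: (a) `P` is additive, i.e. of the form
`c_0 z + c_1 z^p + ⋯ + c_m z^{p^m}`; (b) `P(y + z) = P(y) + P(z)` for all `y, z ∈ L`;
(c) the roots of `P` in `L` form an `F_p`-vector space under addition, all roots occur
with the same multiplicity, and that multiplicity is a power of `p`. -/
theorem additive_polynomial_tfae (p : ℕ) (hp : p.Prime) (K : Type*) [Field K]
    [CharP K p] (P : Polynomial K) (hP : P ≠ 0) :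
    ((∃ (m : ℕ) (c : ℕ → K),
        P = ∑ i ∈ Finset.range (m + 1), Polynomial.C (c i) * Polynomial.X ^ p ^ i) ↔
      (∀ y z : AlgebraicClosure K,
        Polynomial.aeval (y + z) P = Polynomial.aeval y P + Polynomial.aeval z P)) ∧
    ((∃ (m : ℕ) (c : ℕ → K),
        P = ∑ i ∈ Finset.range (m + 1), Polynomial.C (c i) * Polynomial.X ^ p ^ i) ↔
      ((Polynomial.aeval (0 : AlgebraicClosure K) P = 0) ∧
        (∀ y z : AlgebraicClosure K,
          Polynomial.aeval y P = 0 → Polynomial.aeval z P = 0 →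
            Polynomial.aeval (y + z) P = 0) ∧
        ∃ e : ℕ, ∀ y : AlgebraicClosure K, Polynomial.aeval y P = 0 →
          Polynomial.rootMultiplicity y
            (P.map (algebraMap K (AlgebraicClosure K))) = p ^ e)) := by
  set L := AlgebraicClosure K with hL
  set A := algebraMap K L with hA
  have hab : (∃ (m : ℕ) (c : ℕ → K),
      P = ∑ i ∈ Finset.range (m + 1), C (c i) * X ^ p ^ i) →
      ∀ y z : L, aeval (y + z) P = aeval y P + aeval z P := by
    rintro ⟨m, c, hrep⟩ y z
    rw [hrep]
    exact addpoly_aeval_add hp m c y z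
  have hba : (∀ y z : L, aeval (y + z) P = aeval y P + aeval z P) →
      ∃ (m : ℕ) (c : ℕ → K),
        P = ∑ i ∈ Finset.range (m + 1), C (c i) * X ^ p ^ i := by
    intro hb
    apply addpoly_repr hp
    intro n hn
    have hPm : ∀ y z : L, eval (y + z) (P.map A) =
        eval y (P.map A) + eval z (P.map A) := by
      intro y z
      rw [eval_map, eval_map, eval_map, ← aeval_def, ← aeval_def, ← aeval_def]
      exact hb y z
    have := addpoly_core hp (P.map A).natDegree (P.map A) le_rfl hPm n hn
    rw [coeff_map] at this
    exact (_root_.map_eq_zero A).mp this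
  refine ⟨⟨hab, hba⟩, ?_, ?_⟩
  · intro h
    have hb := hab h
    refine ⟨?_, ?_, ?_⟩
    · have := hb 0 0
      rw [add_zero] at this
      exact (left_eq_add.mp this)
    · intro y z hy hz
      rw [hb y z, hy, hz, add_zero]
    · obtain ⟨m, c, hrep⟩ := h
      exact addpoly_mult hp P hP m c hrep
  · rintro ⟨h0, hadd, e, hmult⟩
    exact addpoly_of_roots hp P hP h0 hadd e hmult
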